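/- There is an absolute constant C such that for all integers d ≥ 2 and all real x ≥ 1, the number K_d(x) of composite integers n ≤ x having exactly d distinct prime factors and satisfying rad(φ(n)) ∣ n − 1 is at most C · x^{1 - 1/(2d)}; the constant C does not depend on d. -/

import Mathlib

open Finset

/-- The radical of a natural number: the product of its distinct prime divisors. -/
def rad (n : ℕ) : ℕ := ∏ p ∈ n.primeFactors, p

namespace KdAux

lemma rad_dvd_rad {a b : ℕ} (h : a ∣ b) (hb : b ≠ 0) : rad a ∣ rad b :=
  Finset.prod_dvd_prod_of_subset _ _ _ (Nat.primeFactors_mono h hb)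

lemma rad_dvd_self (n : ℕ) : rad n ∣ n := Nat.prod_primeFactors_dvd n

lemma squarefree_dvd_rad {s t : ℕ} (hs : Squarefree s) (h : s ∣ t) (ht : t ≠ 0) :
    s ∣ rad t := by
  have h1 : (∏ p ∈ s.primeFactors, p) = s := Nat.prod_primeFactors_of_squarefree hs
  calc s = ∏ p ∈ s.primeFactors, p := h1.symm
    _ ∣ ∏ p ∈ t.primeFactors, p :=
      Finset.prod_dvd_prod_of_subset _ _ _ (Nat.primeFactors_mono h ht)

/-- largest prime factor -/
def Pfun (n : ℕ) : ℕ := n.primeFactors.sup id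

/-- largest `k` with `k^2 ∣ t` -/
def Kfun (t : ℕ) : ℕ := ((Finset.Icc 1 t).filter fun c => c ^ 2 ∣ t).sup id

def Sfun (t : ℕ) : ℕ := t / (Kfun t) ^ 2

lemma Pfun_mem {n : ℕ} (hn : 1 < n) : Pfun n ∈ n.primeFactors := by
  obtain ⟨i, hi, hsup⟩ :=
    Finset.exists_mem_eq_sup n.primeFactors (Nat.nonempty_primeFactors.2 hn) id
  rw [Pfun, hsup]; exact hi

lemma le_Pfun {n q : ℕ} (hq : q ∈ n.primeFactors) : q ≤ Pfun n :=
  Finset.le_sup (f := id) hq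

lemma Kfun_mem {t : ℕ} (ht : 1 ≤ t) :
    Kfun t ∈ (Finset.Icc 1 t).filter fun c => c ^ 2 ∣ t := by
  have hne : ((Finset.Icc 1 t).filter fun c => c ^ 2 ∣ t).Nonempty :=
    ⟨1, by simp [Finset.mem_Icc, ht]⟩
  obtain ⟨i, hi, hsup⟩ := Finset.exists_mem_eq_sup _ hne id
  rw [Kfun, hsup]; exact hi

lemma Kfun_pos {t : ℕ} (ht : 1 ≤ t) : 1 ≤ Kfun t := by
  have := Kfun_mem ht
  simp only [Finset.mem_filter, Finset.mem_Icc] at this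
  exact this.1.1

lemma Kfun_sq_dvd {t : ℕ} (ht : 1 ≤ t) : (Kfun t) ^ 2 ∣ t := by
  have := Kfun_mem ht
  simp only [Finset.mem_filter] at this
  exact this.2

lemma le_Kfun {t c : ℕ} (ht : 1 ≤ t) (hc : 1 ≤ c) (h : c ^ 2 ∣ t) : c ≤ Kfun t := by
  have hct : c ∣ t := (dvd_pow_self c (two_ne_zero)).trans h
  have : c ∈ (Finset.Icc 1 t).filter fun c => c ^ 2 ∣ t := by
    simp only [Finset.mem_filter, Finset.mem_Icc]
    exact ⟨⟨hc, Nat.le_of_dvd ht hct⟩, h⟩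
  exact Finset.le_sup (f := id) this

lemma Sfun_mul {t : ℕ} (ht : 1 ≤ t) : Sfun t * (Kfun t) ^ 2 = t :=
  Nat.div_mul_cancel (Kfun_sq_dvd ht)

lemma Sfun_pos {t : ℕ} (ht : 1 ≤ t) : 1 ≤ Sfun t := by
  rcases Nat.eq_zero_or_pos (Sfun t) with h | h
  · exfalso; have := Sfun_mul ht; rw [h, zero_mul] at this; omega
  · exact h

lemma Sfun_squarefree {t : ℕ} (ht : 1 ≤ t) : Squarefree (Sfun t) := by
  rw [Nat.squarefree_iff_prime_squarefree]
  intro q hq hq2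
  have hk1 := Kfun_pos ht
  have hdvd : (q * Kfun t) ^ 2 ∣ t := by
    have h1 : q * q ∣ Sfun t := hq2
    have : (q * q) * (Kfun t) ^ 2 ∣ Sfun t * (Kfun t) ^ 2 :=
      mul_dvd_mul h1 dvd_rfl
    rw [Sfun_mul ht] at this
    calc (q * Kfun t) ^ 2 = (q * q) * (Kfun t) ^ 2 := by ring
      _ ∣ t := this
  have hle := le_Kfun ht (Nat.mul_pos hq.pos hk1) hdvd
  have : 2 * Kfun t ≤ q * Kfun t := Nat.mul_le_mul_right _ hq.two_le
  omega

end KdAux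
namespace KdAux

def sOf (n : ℕ) : ℕ := Sfun (Pfun n - 1)
def kOf (n : ℕ) : ℕ := Kfun (Pfun n - 1)
def jOf (n : ℕ) : ℕ := (n / Pfun n - 1) / sOf n

lemma spec {N d n : ℕ} (hd : 2 ≤ d) (hn1 : 1 < n) (hnp : ¬ n.Prime)
    (hcard : n.primeFactors.card = d) (hrad : rad n.totient ∣ n - 1) (hnN : n ≤ N) :
    1 ≤ sOf n ∧ sOf n ≤ N ∧ 1 ≤ jOf n ∧ jOf n ≤ N ∧ 1 ≤ kOf n ∧ kOf n ≤ N ∧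
      (jOf n * sOf n) ^ d ≤ N ^ (d - 1) ∧ jOf n * (sOf n) ^ 2 * (kOf n) ^ 2 ≤ N ∧
      n = (jOf n * sOf n + 1) * (sOf n * (kOf n) ^ 2 + 1) := by
  have hn0 : n ≠ 0 := by omega
  simp only [sOf, kOf, jOf]
  -- largest prime factor
  set p := Pfun n with hp_def
  have hp_mem : p ∈ n.primeFactors := Pfun_mem hn1
  obtain ⟨hp_prime, hp_dvd, -⟩ := Nat.mem_primeFactors.1 hp_mem
  have hp2 : 2 ≤ p := hp_prime.two_le
  have hpn : p ≤ n := Nat.le_of_dvd (by omega) hp_dvd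
  have htot_pos : 0 < n.totient := Nat.totient_pos.2 (by omega)
  -- squarefree
  have hsqf : Squarefree n := by
    rw [Nat.squarefree_iff_prime_squarefree]
    intro q hq hqq
    have hq2 : q ^ 2 ∣ n := by rwa [pow_two]
    have hqtot : q ∣ n.totient := by
      have h1 : (q ^ 2).totient ∣ n.totient := Nat.totient_dvd_of_dvd hq2
      have h2 : (q ^ 2).totient = q ^ 1 * (q - 1) := Nat.totient_prime_pow hq (by omega)
      have : q ∣ (q ^ 2).totient := by rw [h2, pow_one]; exact Dvd.intro _ rfl
      exact this.trans h1
    have hqrad : q ∣ rad n.totient := by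
      refine (Finset.dvd_prod_of_mem _ ?_)
      exact Nat.mem_primeFactors.2 ⟨hq, hqtot, by omega⟩
    have hq_n1 : q ∣ n - 1 := hqrad.trans hrad
    have hq_n : q ∣ n := (dvd_mul_left q q).trans hqq
    have : q ∣ 1 := by
      have := Nat.dvd_sub hq_n hq_n1
      rwa [Nat.sub_sub_self (by omega : 1 ≤ n)] at this
    have h6 := Nat.le_of_dvd one_pos this
    have := hq.two_le
    omega
  -- m = n / p
  set m := n / p with hm_def
  have hm : m * p = n := Nat.div_mul_cancel hp_dvd
  have hm0 : m ≠ 0 := by intro h; rw [h, zero_mul] at hm; exact hn0 hm.symm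
  have hm1 : m ≠ 1 := by intro h; rw [h, one_mul] at hm; exact hnp (hm ▸ hp_prime)
  have hm2 : 2 ≤ m := (Nat.two_le_iff m).2 ⟨hm0, hm1⟩
  have hmn : m ∣ n := ⟨p, hm.symm⟩
  have hmlen : m ≤ n := Nat.le_of_dvd (by omega) hmn
  have hpm : ¬ p ∣ m := by
    intro hpm
    have : p * p ∣ n := by
      obtain ⟨c, hc⟩ := hpm
      exact ⟨c, by rw [← hm, hc]; ring⟩
    exact (Nat.squarefree_iff_prime_squarefree.1 hsqf p hp_prime) this
  have hmsqf : Squarefree m := hsqf.squarefree_of_dvd hmn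
  -- cardinality of prime factors of m
  have hpf_eq : n.primeFactors = m.primeFactors ∪ {p} := by
    rw [← hm, Nat.primeFactors_mul hm0 (by omega), hp_prime.primeFactors]
  have hp_not : p ∉ m.primeFactors := fun h => hpm (Nat.mem_primeFactors.1 h).2.1
  have hcard_m : m.primeFactors.card = d - 1 := by
    have : n.primeFactors.card = m.primeFactors.card + 1 := by
      rw [hpf_eq, Finset.card_union_of_disjoint (by simpa using hp_not)]
      simp
    omega
  -- m ≤ p ^ (d-1)
  have hmle : m ≤ p ^ (d - 1) := by
    have h1 : (∏ q ∈ m.primeFactors, q) = m := Nat.prod_primeFactors_of_squarefree hmsqf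
    have h2 : (∏ q ∈ m.primeFactors, q) ≤ ∏ q ∈ m.primeFactors, p := by
      refine Finset.prod_le_prod (fun i _ => Nat.zero_le _) (fun q hq => ?_)
      exact le_Pfun (Nat.primeFactors_mono hmn hn0 hq)
    rw [h1, Finset.prod_const, hcard_m] at h2
    exact h2
  have hmd : m ^ d ≤ N ^ (d - 1) := by
    calc m ^ d = m ^ (d - 1) * m := by rw [← pow_succ]; congr 1; omega
      _ ≤ m ^ (d - 1) * p ^ (d - 1) := Nat.mul_le_mul_left _ hmle
      _ = (m * p) ^ (d - 1) := (mul_pow _ _ _).symm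
      _ = n ^ (d - 1) := by rw [hm]
      _ ≤ N ^ (d - 1) := Nat.pow_le_pow_left hnN _
  -- decomposition of p - 1
  set t := p - 1 with ht_def
  have ht1 : 1 ≤ t := by omega
  set k := Kfun t with hk_def
  set s := Sfun t with hs_def
  have hk1 : 1 ≤ k := Kfun_pos ht1
  have hst : s * k ^ 2 = t := Sfun_mul ht1
  have hs1 : 1 ≤ s := Sfun_pos ht1
  have hssqf : Squarefree s := Sfun_squarefree ht1
  have hs_dvd_t : s ∣ t := ⟨k ^ 2, hst.symm⟩
  have hsle : s ≤ t := Nat.le_of_dvd (by omega) hs_dvd_t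
  have hkle : k ≤ t := by
    have : k ∣ t := (dvd_pow_self k two_ne_zero).trans (Kfun_sq_dvd ht1)
    exact Nat.le_of_dvd (by omega) this
  -- rad t ∣ m - 1
  have hradt_m1 : rad t ∣ m - 1 := by
    have h1 : t ∣ n.totient := by
      have := Nat.totient_dvd_of_dvd hp_dvd
      rwa [Nat.totient_prime hp_prime] at this
    have h2 : rad t ∣ rad n.totient := rad_dvd_rad h1 (by omega)
    have h3 : rad t ∣ n - 1 := h2.trans hrad
    have h4 : rad t ∣ t * m := dvd_mul_of_dvd_left (rad_dvd_self t) m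
    have e1 : n - 1 = t * m + (m - 1) := by
      have h5 : t * m = m * p - m := by
        rw [ht_def, Nat.sub_mul, one_mul, Nat.mul_comm]
      rw [h5]
      omega
    rw [e1] at h3
    exact (Nat.dvd_add_right h4).mp h3
  have hs_m1 : s ∣ m - 1 := (squarefree_dvd_rad hssqf hs_dvd_t (by omega)).trans hradt_m1
  set j := (m - 1) / s with hj_def
  have hj : j * s = m - 1 := Nat.div_mul_cancel hs_m1
  have hj1 : 1 ≤ j := by
    rcases Nat.eq_zero_or_pos j with h | h
    · rw [h, zero_mul] at hj; omega
    · exact h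
  have hjN : j ≤ N := by
    have : j ≤ j * s := Nat.le_mul_of_pos_right _ hs1
    omega
  -- final bounds
  refine ⟨hs1, by omega, hj1, hjN, hk1, by omega, ?_, ?_, ?_⟩
  · calc (j * s) ^ d = (m - 1) ^ d := by rw [hj]
      _ ≤ m ^ d := Nat.pow_le_pow_left (by omega) _
      _ ≤ N ^ (d - 1) := hmd
  · calc j * s ^ 2 * k ^ 2 = (j * s) * (s * k ^ 2) := by ring
      _ = (m - 1) * t := by rw [hj, hst]
      _ ≤ m * p := Nat.mul_le_mul (by omega) (by omega)
      _ = n := hm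
      _ ≤ N := hnN
  · have e2 : j * s + 1 = m := by omega
    have e3 : s * k ^ 2 + 1 = p := by omega
    rw [e2, e3, hm]

end KdAux
namespace KdAux

lemma sum_inv_sqrt (n : ℕ) :
    ∑ j ∈ Finset.Icc 1 n, 1 / Real.sqrt j ≤ 2 * Real.sqrt n := by
  induction n with
  | zero => simp
  | succ n ih =>
    rw [Finset.sum_Icc_succ_top (by omega)]
    have ha : (0:ℝ) ≤ Real.sqrt n := Real.sqrt_nonneg _
    have hb : (0:ℝ) < Real.sqrt ((n:ℝ) + 1) := Real.sqrt_pos.2 (by positivity)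
    have ha2 : Real.sqrt (n:ℝ) ^ 2 = (n:ℝ) := Real.sq_sqrt (by positivity)
    have hb2 : Real.sqrt ((n:ℝ) + 1) ^ 2 = (n:ℝ) + 1 := Real.sq_sqrt (by positivity)
    have key : 1 / Real.sqrt ((n:ℝ) + 1)
        ≤ 2 * Real.sqrt ((n:ℝ) + 1) - 2 * Real.sqrt (n:ℝ) := by
      rw [div_le_iff₀ hb]
      nlinarith [sq_nonneg (Real.sqrt ((n:ℝ) + 1) - Real.sqrt (n:ℝ))]
    push_cast
    linarith [ih, key]

lemma sum_inv_s32_aux (n : ℕ) (hn : 1 ≤ n) :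
    ∑ s ∈ Finset.Icc 1 n, 1 / ((s:ℝ) * Real.sqrt s) ≤ 3 - 2 / Real.sqrt n := by
  induction n with
  | zero => omega
  | succ n ih =>
    rcases Nat.eq_zero_or_pos n with h0 | h1
    · subst h0
      norm_num
    · have ihn := ih h1
      rw [Finset.sum_Icc_succ_top (by omega)]
      have ha : (0:ℝ) < Real.sqrt n := Real.sqrt_pos.2 (by positivity)
      have hb : (0:ℝ) < Real.sqrt ((n:ℝ) + 1) := Real.sqrt_pos.2 (by positivity)
      have ha2 : Real.sqrt (n:ℝ) ^ 2 = (n:ℝ) := Real.sq_sqrt (by positivity)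
      have hb2 : Real.sqrt ((n:ℝ) + 1) ^ 2 = (n:ℝ) + 1 := Real.sq_sqrt (by positivity)
      have hab : Real.sqrt (n:ℝ) ≤ Real.sqrt ((n:ℝ) + 1) := Real.sqrt_le_sqrt (by linarith)
      have key : 1 / (((n:ℝ) + 1) * Real.sqrt ((n:ℝ) + 1))
          ≤ 2 / Real.sqrt (n:ℝ) - 2 / Real.sqrt ((n:ℝ) + 1) := by
        rw [div_sub_div _ _ (ne_of_gt ha) (ne_of_gt hb), div_le_div_iff₀ (by positivity) (by positivity)]
        have h3 : (Real.sqrt ((n:ℝ)+1) - Real.sqrt n) * (Real.sqrt ((n:ℝ)+1) + Real.sqrt n) = 1 := by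
          nlinarith
        nlinarith [mul_pos ha hb, mul_le_mul_of_nonneg_right hab hb.le,
          mul_pos (mul_pos ha hb) hb]
      push_cast
      push_cast at ihn
      linarith [ihn, key]

lemma sum_inv_s32 (n : ℕ) :
    ∑ s ∈ Finset.Icc 1 n, 1 / ((s:ℝ) * Real.sqrt s) ≤ 3 := by
  rcases Nat.eq_zero_or_pos n with h0 | h1
  · subst h0; simp
  · have := sum_inv_s32_aux n h1
    have h2 : 0 ≤ 2 / Real.sqrt n := by positivity
    linarith

end KdAux
open KdAux in
theorem K_d_upper_bound :
    ∃ C : ℝ, ∀ d : ℕ, 2 ≤ d → ∀ x : ℝ, 1 ≤ x →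
      ((((Finset.Icc 1 ⌊x⌋₊).filter
        (fun n => 1 < n ∧ ¬ n.Prime ∧ n.primeFactors.card = d ∧
          rad n.totient ∣ n - 1)).card : ℝ))
        ≤ C * x ^ ((1 : ℝ) - 1 / (2 * (d : ℝ))) := by
  classical
  use 6
  intro d hd x hx
  set N := ⌊x⌋₊ with hN_def
  have hN1 : 1 ≤ N := Nat.le_floor (by exact_mod_cast hx)
  have hd0 : (d:ℝ) ≠ 0 := by positivity
  have hdpos : (0:ℝ) < d := by positivity
  set y : ℝ := (N : ℝ) with hy_def
  have hy1 : (1:ℝ) ≤ y := by rw [hy_def]; exact_mod_cast hN1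
  have hy0 : (0:ℝ) ≤ y := by linarith
  have hypos : (0:ℝ) < y := by linarith
  set E : ℝ := y ^ (((d:ℝ) - 1) / (d:ℝ)) with hE_def
  have hE0 : (0:ℝ) ≤ E := Real.rpow_nonneg hy0 _
  -- the target triple set
  set T := ((Finset.Icc 1 N ×ˢ Finset.Icc 1 N) ×ˢ Finset.Icc 1 N).filter
    (fun q : (ℕ × ℕ) × ℕ => (q.1.2 * q.1.1) ^ d ≤ N ^ (d - 1) ∧
      q.1.2 * q.1.1 ^ 2 * q.2 ^ 2 ≤ N) with hT_def
  -- step 1 : injection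
  have hST : ((Finset.Icc 1 N).filter
      (fun n => 1 < n ∧ ¬ n.Prime ∧ n.primeFactors.card = d ∧
        rad n.totient ∣ n - 1)).card ≤ T.card := by
    apply Finset.card_le_card_of_injOn (fun n => ((sOf n, jOf n), kOf n))
    · intro n hn
      rw [Finset.mem_coe, Finset.mem_filter, Finset.mem_Icc] at hn
      obtain ⟨⟨-, hnN⟩, hn1, hnp, hcard, hrad⟩ := hn
      obtain ⟨h1, h2, h3, h4, h5, h6, h7, h8, -⟩ := spec hd hn1 hnp hcard hrad hnN
      rw [hT_def]
      simp only [Finset.mem_coe, Finset.mem_filter, Finset.mem_product, Finset.mem_Icc]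
      exact ⟨⟨⟨⟨h1, h2⟩, ⟨h3, h4⟩⟩, ⟨h5, h6⟩⟩, h7, h8⟩
    · intro n₁ h1 n₂ h2 heq
      simp only [Finset.coe_filter, Set.mem_setOf_eq, Finset.mem_Icc] at h1 h2
      obtain ⟨⟨-, hnN₁⟩, hn1₁, hnp₁, hcard₁, hrad₁⟩ := h1
      obtain ⟨⟨-, hnN₂⟩, hn1₂, hnp₂, hcard₂, hrad₂⟩ := h2
      obtain ⟨-, -, -, -, -, -, -, -, e₁⟩ := spec hd hn1₁ hnp₁ hcard₁ hrad₁ hnN₁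
      obtain ⟨-, -, -, -, -, -, -, -, e₂⟩ := spec hd hn1₂ hnp₂ hcard₂ hrad₂ hnN₂
      have hs : sOf n₁ = sOf n₂ := congrArg (fun q : (ℕ × ℕ) × ℕ => q.1.1) heq
      have hj : jOf n₁ = jOf n₂ := congrArg (fun q : (ℕ × ℕ) × ℕ => q.1.2) heq
      have hk : kOf n₁ = kOf n₂ := congrArg (fun q : (ℕ × ℕ) × ℕ => q.2) heq
      rw [e₁, e₂, hs, hj, hk]
  -- step 2 : fiberwise count
  have hfib : T.card = ∑ b ∈ Finset.Icc 1 N ×ˢ Finset.Icc 1 N,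
      (T.filter (fun q => q.1 = b)).card := by
    apply Finset.card_eq_sum_card_fiberwise
    intro q hq
    rw [hT_def] at hq
    simp only [Finset.mem_coe, Finset.mem_filter, Finset.mem_product] at hq
    exact Finset.mem_product.2 ⟨hq.1.1.1, hq.1.1.2⟩
  -- step 3 : bound each fiber
  have hfib_bound : ∀ b ∈ Finset.Icc 1 N ×ˢ Finset.Icc 1 N,
      ((T.filter (fun q => q.1 = b)).card : ℝ) ≤
        (if (b.2 * b.1) ^ d ≤ N ^ (d - 1) then
          Real.sqrt y / (Real.sqrt b.2 * b.1) else 0) := by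
    rintro ⟨s, j⟩ hb
    simp only [Finset.mem_product, Finset.mem_Icc] at hb
    obtain ⟨⟨hs1, hsN⟩, hj1, hjN⟩ := hb
    by_cases hc : (j * s) ^ d ≤ N ^ (d - 1)
    · rw [if_pos hc]
      have hcard_le : (T.filter (fun q => q.1 = (s, j))).card ≤
          Nat.sqrt (N / (j * s ^ 2)) := by
        have := Finset.card_le_card_of_injOn (fun q : (ℕ × ℕ) × ℕ => q.2)
          (s := T.filter (fun q => q.1 = (s, j)))
          (t := Finset.Icc 1 (Nat.sqrt (N / (j * s ^ 2)))) ?_ ?_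
        · simpa [Nat.card_Icc] using this
        · intro q hq
          rw [Finset.mem_coe, Finset.mem_filter, hT_def, Finset.mem_filter] at hq
          obtain ⟨⟨hqmem, hq1, hq2⟩, hqb⟩ := hq
          simp only [Finset.mem_product, Finset.mem_Icc] at hqmem
          rw [Finset.mem_coe, Finset.mem_Icc]
          refine ⟨hqmem.2.1, ?_⟩
          rw [Nat.le_sqrt]
          rw [Nat.le_div_iff_mul_le (by rw [← hqb] at *; positivity)]
          rw [hqb] at hq2
          calc q.2 * q.2 * (j * s ^ 2) = j * s ^ 2 * q.2 ^ 2 := by ring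
            _ ≤ N := hq2
        · intro q1 hq1 q2 hq2 he
          simp only [Finset.coe_filter, Set.mem_setOf_eq] at hq1 hq2
          exact Prod.ext (hq1.2.trans hq2.2.symm) he
      calc ((T.filter (fun q => q.1 = (s, j))).card : ℝ)
          ≤ (Nat.sqrt (N / (j * s ^ 2)) : ℝ) := by exact_mod_cast hcard_le
        _ ≤ Real.sqrt ((N / (j * s ^ 2) : ℕ) : ℝ) := Real.nat_sqrt_le_real_sqrt
        _ ≤ Real.sqrt ((N : ℝ) / ((j : ℝ) * (s : ℝ) ^ 2)) := by
            apply Real.sqrt_le_sqrt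
            calc ((N / (j * s ^ 2) : ℕ) : ℝ) ≤ (N : ℝ) / ((j * s ^ 2 : ℕ) : ℝ) :=
                Nat.cast_div_le
              _ = (N : ℝ) / ((j : ℝ) * (s : ℝ) ^ 2) := by push_cast; ring
        _ = Real.sqrt y / (Real.sqrt j * s) := by
            rw [Real.sqrt_div hy0, Real.sqrt_mul (by positivity),
              Real.sqrt_sq (by positivity)]
    · rw [if_neg hc]
      have : T.filter (fun q => q.1 = (s, j)) = ∅ := by
        rw [Finset.filter_eq_empty_iff]
        intro q hq hqb
        rw [hT_def, Finset.mem_filter] at hq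
        rw [hqb] at hq
        exact hc hq.2.1
      rw [this]
      simp
  -- step 4 : inner sum bound
  have hinner : ∀ s ∈ Finset.Icc 1 N,
      (∑ j ∈ Finset.Icc 1 N, (if (j * s) ^ d ≤ N ^ (d - 1) then
          Real.sqrt y / (Real.sqrt j * s) else 0))
        ≤ (Real.sqrt y / s) * (2 * Real.sqrt (E / s)) := by
    intro s hs
    rw [Finset.mem_Icc] at hs
    have hs1 : 1 ≤ s := hs.1
    have hsR : (1:ℝ) ≤ (s:ℝ) := by exact_mod_cast hs1
    set F := ⌊E / (s:ℝ)⌋₊ with hF_def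
    have hEs0 : (0:ℝ) ≤ E / s := div_nonneg hE0 (by positivity)
    have hEd : E ^ d = y ^ (d - 1) := by
      have h1 : E ^ d = E ^ ((d:ℕ):ℝ) := (Real.rpow_natCast E d).symm
      have h2 : (y ^ (((d:ℝ) - 1) / (d:ℝ))) ^ ((d:ℕ):ℝ)
          = y ^ ((((d:ℝ) - 1) / (d:ℝ)) * (d:ℕ)) := (Real.rpow_mul hy0 _ _).symm
      have h3 : (((d:ℝ) - 1) / (d:ℝ)) * ((d:ℕ):ℝ) = (d:ℝ) - 1 := by
        field_simp
      have h4 : ((d:ℝ) - 1) = (((d - 1 : ℕ)):ℝ) := by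
        have : (1:ℕ) ≤ d := by omega
        push_cast [Nat.cast_sub this]
        ring
      rw [h1, hE_def, h2, h3, h4, Real.rpow_natCast]
    have hsubset : (Finset.Icc 1 N).filter (fun j => (j * s) ^ d ≤ N ^ (d - 1))
        ⊆ Finset.Icc 1 F := by
      intro j hj
      rw [Finset.mem_filter, Finset.mem_Icc] at hj
      obtain ⟨⟨hj1, hjN⟩, hcond⟩ := hj
      rw [Finset.mem_Icc]
      refine ⟨hj1, Nat.le_floor ?_⟩
      have hcast : ((j:ℝ) * (s:ℝ)) ^ d ≤ y ^ (d - 1) := by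
        rw [hy_def]
        exact_mod_cast hcond
      rw [← hEd] at hcast
      have hjle : (j:ℝ) * (s:ℝ) ≤ E :=
        (pow_le_pow_iff_left₀ (by positivity) hE0 (by omega)).1 hcast
      rw [le_div_iff₀ (by positivity)]
      exact hjle
    calc (∑ j ∈ Finset.Icc 1 N, (if (j * s) ^ d ≤ N ^ (d - 1) then
            Real.sqrt y / (Real.sqrt j * s) else 0))
        = ∑ j ∈ (Finset.Icc 1 N).filter (fun j => (j * s) ^ d ≤ N ^ (d - 1)),
            Real.sqrt y / (Real.sqrt j * s) := (Finset.sum_filter _ _).symm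
      _ ≤ ∑ j ∈ Finset.Icc 1 F, Real.sqrt y / (Real.sqrt j * s) := by
          apply Finset.sum_le_sum_of_subset_of_nonneg hsubset
          intro j _ _
          positivity
      _ = (Real.sqrt y / s) * ∑ j ∈ Finset.Icc 1 F, 1 / Real.sqrt j := by
          rw [Finset.mul_sum]
          apply Finset.sum_congr rfl
          intro j _
          rw [div_mul_div_comm, mul_one, mul_comm (Real.sqrt j) (s:ℝ)]
      _ ≤ (Real.sqrt y / s) * (2 * Real.sqrt F) := by
          apply mul_le_mul_of_nonneg_left (sum_inv_sqrt F) (by positivity)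
      _ ≤ (Real.sqrt y / s) * (2 * Real.sqrt (E / s)) := by
          have hFle : (F:ℝ) ≤ E / s := Nat.floor_le hEs0
          have := Real.sqrt_le_sqrt hFle
          have h2 : (0:ℝ) ≤ Real.sqrt y / s := by positivity
          nlinarith [Real.sqrt_nonneg (F:ℝ)]
  -- step 5 : total bound
  have hsum : (T.card : ℝ) ≤ 6 * (Real.sqrt y * Real.sqrt E) := by
    have h0 : (T.card : ℝ) = ∑ b ∈ Finset.Icc 1 N ×ˢ Finset.Icc 1 N,
        ((T.filter (fun q => q.1 = b)).card : ℝ) := by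
      rw [hfib]
      push_cast
      rfl
    calc (T.card : ℝ)
        = ∑ b ∈ Finset.Icc 1 N ×ˢ Finset.Icc 1 N,
            ((T.filter (fun q => q.1 = b)).card : ℝ) := h0
      _ ≤ ∑ b ∈ Finset.Icc 1 N ×ˢ Finset.Icc 1 N,
            (if (b.2 * b.1) ^ d ≤ N ^ (d - 1) then
              Real.sqrt y / (Real.sqrt b.2 * b.1) else 0) :=
          Finset.sum_le_sum hfib_bound
      _ = ∑ s ∈ Finset.Icc 1 N, ∑ j ∈ Finset.Icc 1 N,
            (if (j * s) ^ d ≤ N ^ (d - 1) then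
              Real.sqrt y / (Real.sqrt j * s) else 0) :=
          Finset.sum_product _ _ _
      _ ≤ ∑ s ∈ Finset.Icc 1 N, (Real.sqrt y / s) * (2 * Real.sqrt (E / s)) :=
          Finset.sum_le_sum hinner
      _ = (2 * Real.sqrt y * Real.sqrt E) *
            ∑ s ∈ Finset.Icc 1 N, 1 / ((s:ℝ) * Real.sqrt s) := by
          rw [Finset.mul_sum]
          apply Finset.sum_congr rfl
          intro s _
          rw [Real.sqrt_div hE0]
          ring
      _ ≤ (2 * Real.sqrt y * Real.sqrt E) * 3 := by
          apply mul_le_mul_of_nonneg_left (sum_inv_s32 N) (by positivity)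
      _ = 6 * (Real.sqrt y * Real.sqrt E) := by ring
  -- step 6 : conclude
  have hd2 : (2:ℝ) ≤ (d:ℝ) := by exact_mod_cast hd
  have hfinal : Real.sqrt y * Real.sqrt E ≤ x ^ ((1:ℝ) - 1 / (2 * (d:ℝ))) := by
    have h1 : Real.sqrt y * Real.sqrt E = y ^ ((1:ℝ) - 1 / (2 * (d:ℝ))) := by
      rw [Real.sqrt_eq_rpow, Real.sqrt_eq_rpow, hE_def, ← Real.rpow_mul hy0,
        ← Real.rpow_add hypos]
      congr 1
      field_simp
      ring
    rw [h1]
    apply Real.rpow_le_rpow hy0 ?_ ?_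
    · rw [hy_def, hN_def]
      exact Nat.floor_le (by linarith)
    · have h2 : 1 / (2 * (d:ℝ)) ≤ 1 := by
        rw [div_le_one (by linarith)]
        linarith
      linarith
  calc (((Finset.Icc 1 N).filter
      (fun n => 1 < n ∧ ¬ n.Prime ∧ n.primeFactors.card = d ∧
        rad n.totient ∣ n - 1)).card : ℝ)
      ≤ (T.card : ℝ) := by exact_mod_cast hST
    _ ≤ 6 * (Real.sqrt y * Real.sqrt E) := hsum
    _ ≤ 6 * x ^ ((1:ℝ) - 1 / (2 * (d:ℝ))) := by linarith
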